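/- Let {ψ_j}_{j∈ℕ} be a frame for closed subspace S with bounds c₁, c₂, and suppose T and S^⊥ satisfy the subspace condition. Then the consistent reconstruction map F = P_{T S^⊥} (mapping f ∈ H₀ = T ⊕ S^⊥ to the unique element of T with the same samples ⟨·, ψ_j⟩) has condition number κ(F) = sup{‖F(f)‖ / ‖(⟨f,ψ_j⟩)_j‖_{ℓ²} : f ∈ H₀, (⟨f,ψ_j⟩)_j ≠ 0} satisfying sec(θ_{TS})/√c₂ ≤ κ(F) ≤ sec(θ_{TS})/√c₁. -/

import Mathlib

open InnerProductSpace
open scoped ComplexInnerProductSpace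



/-- Banach-type bound: if `T ⊓ Sᗮ = ⊥` and `T + Sᗮ` is closed, then the orthogonal
projection onto `S` is bounded below on `T`. -/
lemma proj_lower_bound {H : Type*} [NormedAddCommGroup H] [InnerProductSpace ℂ H]
    [CompleteSpace H] (S T : Submodule ℂ H) [CompleteSpace S] [CompleteSpace T]
    (hmeet : T ⊓ Sᗮ = ⊥) (hsum : IsClosed ((T ⊔ Sᗮ : Submodule ℂ H) : Set H)) :
    ∃ C : ℝ, 0 < C ∧ ∀ t ∈ T, ‖t‖ ≤ C * ‖(Submodule.orthogonalProjectionOnto S t : H)‖ := by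
  set H₀ : Submodule ℂ H := T ⊔ Sᗮ with hH₀
  haveI : CompleteSpace H₀ := hsum.completeSpace_coe
  set p : Submodule ℂ H₀ := T.comap H₀.subtype with hp
  set q : Submodule ℂ H₀ := Sᗮ.comap H₀.subtype with hq
  have hTclosed : IsClosed (T : Set H) :=
    (completeSpace_coe_iff_isComplete.mp ‹_›).isClosed
  have hpc : IsClosed (p : Set H₀) := hTclosed.preimage continuous_subtype_val
  have hqc : IsClosed (q : Set H₀) := S.isClosed_orthogonal.preimage continuous_subtype_val
  have hcompl : IsCompl p q := by
    constructor
    · rw [disjoint_iff]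
      ext x
      simp only [Submodule.mem_inf, Submodule.mem_comap, Submodule.mem_bot]
      constructor
      · rintro ⟨hx1, hx2⟩
        have : (x : H) ∈ T ⊓ Sᗮ := ⟨hx1, hx2⟩
        rw [hmeet, Submodule.mem_bot] at this
        exact Subtype.ext this
      · rintro rfl; simp
    · rw [codisjoint_iff, eq_top_iff]
      rintro ⟨x, hx⟩ -
      obtain ⟨t, ht, s, hs, rfl⟩ := Submodule.mem_sup.mp hx
      have htH : t ∈ H₀ := Submodule.mem_sup_left ht
      have hsH : s ∈ H₀ := Submodule.mem_sup_right hs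
      refine Submodule.mem_sup.mpr ⟨⟨t, htH⟩, ht, ⟨s, hsH⟩, hs, rfl⟩
  set Q := p.linearProjOfClosedCompl q hcompl hpc hqc with hQ
  refine ⟨max ‖Q‖ 1, lt_of_lt_of_le one_pos (le_max_right _ _), fun t ht => ?_⟩
  set Pt : H := (Submodule.orthogonalProjectionOnto S t : H) with hPt
  have hs' : t - Pt ∈ Sᗮ := Submodule.sub_starProjection_mem_orthogonal (K := S) t
  have htH : t ∈ H₀ := Submodule.mem_sup_left ht
  have hsH : t - Pt ∈ H₀ := Submodule.mem_sup_right hs'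
  have hxH : Pt ∈ H₀ := by
    have : Pt = t - (t - Pt) := (sub_sub_cancel t Pt).symm
    rw [this]; exact Submodule.sub_mem _ htH hsH
  have hQx : (Q ⟨Pt, hxH⟩ : H₀) = (⟨t, htH⟩ : H₀) := by
    have hsplit : (⟨Pt, hxH⟩ : H₀) = (⟨t, htH⟩ : H₀) - (⟨t - Pt, hsH⟩ : H₀) := by
      ext; simp
    rw [hsplit, map_sub]
    have h1 : Q ⟨t, htH⟩ = ⟨⟨t, htH⟩, ht⟩ := by
      show p.linearProjOfClosedCompl q hcompl hpc hqc _ = _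
      rw [Submodule.coe_continuous_linearProjOfClosedCompl']
      exact Submodule.linearProjOfIsCompl_apply_left hcompl ⟨⟨t, htH⟩, ht⟩
    have h2 : Q ⟨t - Pt, hsH⟩ = 0 := by
      show p.linearProjOfClosedCompl q hcompl hpc hqc _ = _
      rw [Submodule.coe_continuous_linearProjOfClosedCompl']
      exact Submodule.linearProjOfIsCompl_apply_right hcompl ⟨⟨t - Pt, hsH⟩, hs'⟩
    rw [h1, h2]
    simp
  have hnorm : ‖t‖ = ‖Q ⟨Pt, hxH⟩‖ := by
    rw [show ‖Q ⟨Pt, hxH⟩‖ = ‖((Q ⟨Pt, hxH⟩ : H₀) : H)‖ from rfl, hQx]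
  have hPtnorm : ‖(⟨Pt, hxH⟩ : H₀)‖ = ‖Pt‖ := rfl
  calc ‖t‖ = ‖Q ⟨Pt, hxH⟩‖ := hnorm
    _ ≤ ‖Q‖ * ‖(⟨Pt, hxH⟩ : H₀)‖ := Q.le_opNorm _
    _ = ‖Q‖ * ‖Pt‖ := by rw [hPtnorm]
    _ ≤ max ‖Q‖ 1 * ‖Pt‖ := mul_le_mul_of_nonneg_right (le_max_left _ _) (norm_nonneg _)


lemma mem_orthogonal_of_samples_zero {H : Type*} [NormedAddCommGroup H]
    [InnerProductSpace ℂ H] [CompleteSpace H] (S : Submodule ℂ H) (ψ : ℕ → H)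
    (hspan : (Submodule.span ℂ (Set.range ψ)).topologicalClosure = S)
    {x : H} (hx : ∀ j, ⟪ψ j, x⟫ = 0) : x ∈ Sᗮ := by
  have hsp : x ∈ (Submodule.span ℂ (Set.range ψ))ᗮ := by
    rw [Submodule.mem_orthogonal]
    intro u hu
    induction hu using Submodule.span_induction with
    | mem u hu => obtain ⟨j, rfl⟩ := hu; exact hx j
    | zero => simp
    | add u v _ _ hu hv => rw [inner_add_left, hu, hv, add_zero]
    | smul c u _ hu => rw [inner_smul_left, hu, mul_zero]
  rw [← hspan, ← Submodule.orthogonal_orthogonal_eq_closure,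
    Submodule.triorthogonal_eq_orthogonal]
  exact hsp


/-- The cosine of the subspace angle between closed subspaces `A` and `B` of a Hilbert
space: `cos θ_{AB} = inf_{a ∈ A, ‖a‖ = 1} ‖P_B a‖`. -/
noncomputable def cosAngle {H : Type*} [NormedAddCommGroup H] [InnerProductSpace ℂ H]
    (A B : Submodule ℂ H) [B.HasOrthogonalProjection] : ℝ :=
  ⨅ a : {x : H // x ∈ A ∧ ‖x‖ = 1}, ‖((Submodule.orthogonalProjectionOnto B (a : H)) : H)‖

open scoped ComplexInnerProductSpace in
/-- Condition number of the consistent reconstruction `F = P_{T S^⊥}`: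
`sec(θ_{TS})/√c₂ ≤ κ(F) ≤ sec(θ_{TS})/√c₁`. -/
theorem consistent_reconstruction_condition_number
    {H : Type*} [NormedAddCommGroup H] [InnerProductSpace ℂ H] [CompleteSpace H]
    (S T : Submodule ℂ H) [CompleteSpace S] [CompleteSpace T]
    (ψ : ℕ → H) (hψS : ∀ j, ψ j ∈ S) (c₁ c₂ : ℝ) (hc₁ : 0 < c₁) (hc : c₁ ≤ c₂)
    (hframe : ∀ f ∈ S,
      c₁ * ‖f‖ ^ 2 ≤ ∑' j, ‖⟪ψ j, f⟫‖ ^ 2 ∧ ∑' j, ‖⟪ψ j, f⟫‖ ^ 2 ≤ c₂ * ‖f‖ ^ 2)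
    (hspan : (Submodule.span ℂ (Set.range ψ)).topologicalClosure = S)
    (hmeet : T ⊓ Sᗮ = ⊥) (hsum : IsClosed ((T ⊔ Sᗮ : Submodule ℂ H) : Set H))
    (F : H →ₗ[ℂ] H)
    (hF : ∀ f ∈ T ⊔ Sᗮ, F f ∈ T ∧ ∀ j, ⟪ψ j, F f⟫ = ⟪ψ j, f⟫) :
    (cosAngle T S)⁻¹ / Real.sqrt c₂ ≤
        (⨆ f : {f : H // f ∈ T ⊔ Sᗮ ∧ ∃ j, ⟪ψ j, (f : H)⟫ ≠ 0},
          ‖F (f : H)‖ / Real.sqrt (∑' j, ‖⟪ψ j, (f : H)⟫‖ ^ 2)) ∧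
      (⨆ f : {f : H // f ∈ T ⊔ Sᗮ ∧ ∃ j, ⟪ψ j, (f : H)⟫ ≠ 0},
          ‖F (f : H)‖ / Real.sqrt (∑' j, ‖⟪ψ j, (f : H)⟫‖ ^ 2)) ≤
        (cosAngle T S)⁻¹ / Real.sqrt c₁ := by
  have hc₂ : (0:ℝ) < c₂ := lt_of_lt_of_le hc₁ hc
  have hsq1 : (0:ℝ) < Real.sqrt c₁ := Real.sqrt_pos.mpr hc₁
  have hsq2 : (0:ℝ) < Real.sqrt c₂ := Real.sqrt_pos.mpr hc₂
  -- samples only see the projection onto S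
  have sample_proj : ∀ (f : H) (j : ℕ),
      ⟪ψ j, f⟫ = ⟪ψ j, ((Submodule.orthogonalProjectionOnto S f : H))⟫ := by
    intro f j
    have h := Submodule.sub_starProjection_mem_orthogonal (K := S) f
    have h2 := (Submodule.mem_orthogonal _ _).mp h (ψ j) (hψS j)
    rw [inner_sub_right, sub_eq_zero] at h2
    exact h2
  have tsum_proj : ∀ f : H, ∑' j, ‖⟪ψ j, f⟫‖ ^ 2 =
      ∑' j, ‖⟪ψ j, ((Submodule.orthogonalProjectionOnto S f : H))⟫‖ ^ 2 :=
    fun f => tsum_congr fun j => by rw [sample_proj]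
  -- frame bounds in terms of the original vector
  have frame_lo : ∀ f : H, c₁ * ‖(Submodule.orthogonalProjectionOnto S f : H)‖ ^ 2 ≤
      ∑' j, ‖⟪ψ j, f⟫‖ ^ 2 := by
    intro f
    rw [tsum_proj]
    exact (hframe _ (Submodule.orthogonalProjectionOnto S f).2).1
  have frame_hi : ∀ f : H, ∑' j, ‖⟪ψ j, f⟫‖ ^ 2 ≤
      c₂ * ‖(Submodule.orthogonalProjectionOnto S f : H)‖ ^ 2 := by
    intro f
    rw [tsum_proj]
    exact (hframe _ (Submodule.orthogonalProjectionOnto S f).2).2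
  have sigma_pos : ∀ f : H, (∃ j, ⟪ψ j, f⟫ ≠ 0) → 0 < ∑' j, ‖⟪ψ j, f⟫‖ ^ 2 := by
    rintro f ⟨j, hj⟩
    have hPf : (Submodule.orthogonalProjectionOnto S f : H) ≠ 0 := by
      intro h
      exact hj (by rw [sample_proj f j, h, inner_zero_right])
    have hn : 0 < ‖(Submodule.orthogonalProjectionOnto S f : H)‖ := norm_pos_iff.mpr hPf
    calc (0:ℝ) < c₁ * ‖(Submodule.orthogonalProjectionOnto S f : H)‖ ^ 2 := mul_pos hc₁ (pow_pos hn 2)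
      _ ≤ _ := frame_lo f
  -- F f - f has zero samples, hence lies in Sᗮ
  have F_sub_mem : ∀ f ∈ T ⊔ Sᗮ, F f - f ∈ Sᗮ := by
    intro f hf
    apply mem_orthogonal_of_samples_zero S ψ hspan
    intro j
    rw [inner_sub_right, (hF f hf).2 j, sub_self]
  have proj_F : ∀ f ∈ T ⊔ Sᗮ,
      (Submodule.orthogonalProjectionOnto S (F f) : H) = (Submodule.orthogonalProjectionOnto S f : H) := by
    intro f hf
    have h0 : Submodule.orthogonalProjectionOnto S (F f - f) = 0 :=
      Submodule.orthogonalProjectionOnto_apply_of_mem_orthogonal (F_sub_mem f hf)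
    have := map_sub (Submodule.orthogonalProjectionOnto S) (F f) f
    rw [h0] at this
    have := congrArg (Subtype.val) this
    simp only [Submodule.coe_sub, Submodule.coe_zero] at this
    exact sub_eq_zero.mp this.symm
  -- F is the identity on T
  have F_fix : ∀ t ∈ T, F t = t := by
    intro t ht
    have ht' : t ∈ T ⊔ Sᗮ := Submodule.mem_sup_left ht
    have h1 : F t - t ∈ T := Submodule.sub_mem _ ((hF t ht').1) ht
    have h2 : F t - t ∈ Sᗮ := F_sub_mem t ht'
    have : F t - t ∈ T ⊓ Sᗮ := ⟨h1, h2⟩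
    rw [hmeet, Submodule.mem_bot] at this
    exact sub_eq_zero.mp this
  -- nonzero elements of T have a nonzero sample
  have exists_sample : ∀ t : H, t ∈ T → t ≠ 0 → ∃ j, ⟪ψ j, t⟫ ≠ 0 := by
    intro t ht ht0
    by_contra h
    push_neg at h
    have : t ∈ T ⊓ Sᗮ := ⟨ht, mem_orthogonal_of_samples_zero S ψ hspan h⟩
    rw [hmeet, Submodule.mem_bot] at this
    exact ht0 this
  have hcos0 : 0 ≤ cosAngle T S := Real.iInf_nonneg fun a => norm_nonneg _
  by_cases hK : Nonempty {f : H // f ∈ T ⊔ Sᗮ ∧ ∃ j, ⟪ψ j, (f : H)⟫ ≠ 0}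
  · set κ := ⨆ f : {f : H // f ∈ T ⊔ Sᗮ ∧ ∃ j, ⟪ψ j, (f : H)⟫ ≠ 0},
      ‖F (f : H)‖ / Real.sqrt (∑' j, ‖⟪ψ j, (f : H)⟫‖ ^ 2) with hκdef
    have unit_mem : ∀ t : H, t ∈ T → t ≠ 0 →
        ((‖t‖ : ℂ)⁻¹ • t ∈ T ∧ ‖(‖t‖ : ℂ)⁻¹ • t‖ = 1) := by
      intro t ht ht0
      refine ⟨T.smul_mem _ ht, ?_⟩
      rw [norm_smul, norm_inv, Complex.norm_real, norm_norm,
        inv_mul_cancel₀ (norm_ne_zero_iff.mpr ht0)]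
    have cos_mul : ∀ t : H, t ∈ T →
        cosAngle T S * ‖t‖ ≤ ‖(Submodule.orthogonalProjectionOnto S t : H)‖ := by
      intro t ht
      rcases eq_or_ne t 0 with rfl | ht0
      · simp [mul_nonneg hcos0 (norm_nonneg (0 : H))]
      · obtain ⟨hmem, hnorm⟩ := unit_mem t ht ht0
        have hle : cosAngle T S ≤
            ‖(Submodule.orthogonalProjectionOnto S ((‖t‖ : ℂ)⁻¹ • t) : H)‖ :=
          ciInf_le ⟨0, by rintro x ⟨a, rfl⟩; exact norm_nonneg _⟩
            (⟨_, hmem, hnorm⟩ : {x : H // x ∈ T ∧ ‖x‖ = 1})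
        have hsmul : (Submodule.orthogonalProjectionOnto S ((‖t‖ : ℂ)⁻¹ • t) : H) =
            (‖t‖ : ℂ)⁻¹ • (Submodule.orthogonalProjectionOnto S t : H) := by
          rw [map_smul]; rfl
        rw [hsmul, norm_smul, norm_inv, Complex.norm_real, norm_norm] at hle
        have htpos : 0 < ‖t‖ := norm_pos_iff.mpr ht0
        calc cosAngle T S * ‖t‖
            ≤ (‖t‖⁻¹ * ‖(Submodule.orthogonalProjectionOnto S t : H)‖) * ‖t‖ :=
              mul_le_mul_of_nonneg_right hle (norm_nonneg t)
          _ = ‖(Submodule.orthogonalProjectionOnto S t : H)‖ := by field_simp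
    obtain ⟨f₀⟩ := hK
    have hf₀T : F ↑f₀ ∈ T := (hF _ f₀.2.1).1
    have hFne : F ↑f₀ ≠ 0 := by
      intro h
      obtain ⟨j, hj⟩ := f₀.2.2
      exact hj (by rw [← (hF _ f₀.2.1).2 j, h, inner_zero_right])
    haveI hA : Nonempty {x : H // x ∈ T ∧ ‖x‖ = 1} :=
      ⟨⟨_, (unit_mem _ hf₀T hFne).1, (unit_mem _ hf₀T hFne).2⟩⟩
    obtain ⟨C, hC, hCb⟩ := proj_lower_bound S T hmeet hsum
    have hcospos : 0 < cosAngle T S := by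
      have hle : C⁻¹ ≤ cosAngle T S := by
        apply le_ciInf
        intro a
        have h1 : ‖(a : H)‖ ≤ C * ‖(Submodule.orthogonalProjectionOnto S (a : H) : H)‖ := hCb _ a.2.1
        rw [a.2.2] at h1
        calc C⁻¹ = C⁻¹ * 1 := (mul_one _).symm
          _ ≤ C⁻¹ * (C * ‖(Submodule.orthogonalProjectionOnto S (a : H) : H)‖) :=
              mul_le_mul_of_nonneg_left h1 (inv_nonneg.mpr hC.le)
          _ = ‖(Submodule.orthogonalProjectionOnto S (a : H) : H)‖ := inv_mul_cancel_left₀ hC.ne' _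
      exact lt_of_lt_of_le (inv_pos.mpr hC) hle
    have upper : ∀ f : {f : H // f ∈ T ⊔ Sᗮ ∧ ∃ j, ⟪ψ j, (f : H)⟫ ≠ 0},
        ‖F (f : H)‖ / Real.sqrt (∑' j, ‖⟪ψ j, (f : H)⟫‖ ^ 2) ≤
          (cosAngle T S)⁻¹ / Real.sqrt c₁ := by
      intro f
      have hPeq := proj_F ↑f f.2.1
      have h1 : cosAngle T S * ‖F ↑f‖ ≤ ‖(Submodule.orthogonalProjectionOnto S (f : H) : H)‖ := by
        rw [← hPeq]; exact cos_mul _ (hF _ f.2.1).1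
      have h2 : Real.sqrt c₁ * ‖(Submodule.orthogonalProjectionOnto S (f : H) : H)‖ ≤
          Real.sqrt (∑' j, ‖⟪ψ j, (f : H)⟫‖ ^ 2) := by
        calc Real.sqrt c₁ * ‖(Submodule.orthogonalProjectionOnto S (f : H) : H)‖
            = Real.sqrt (c₁ * ‖(Submodule.orthogonalProjectionOnto S (f : H) : H)‖ ^ 2) := by
              rw [Real.sqrt_mul hc₁.le, Real.sqrt_sq (norm_nonneg _)]
          _ ≤ _ := Real.sqrt_le_sqrt (frame_lo _)
      have hsig : 0 < Real.sqrt (∑' j, ‖⟪ψ j, (f : H)⟫‖ ^ 2) :=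
        Real.sqrt_pos.mpr (sigma_pos _ f.2.2)
      rw [div_le_div_iff₀ hsig hsq1, le_inv_mul_iff₀ hcospos]
      calc cosAngle T S * (‖F ↑f‖ * Real.sqrt c₁)
          = (cosAngle T S * ‖F ↑f‖) * Real.sqrt c₁ := by ring
        _ ≤ ‖(Submodule.orthogonalProjectionOnto S (f : H) : H)‖ * Real.sqrt c₁ :=
            mul_le_mul_of_nonneg_right h1 hsq1.le
        _ = Real.sqrt c₁ * ‖(Submodule.orthogonalProjectionOnto S (f : H) : H)‖ := mul_comm _ _
        _ ≤ _ := h2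
    have bdd : BddAbove (Set.range fun f : {f : H // f ∈ T ⊔ Sᗮ ∧ ∃ j, ⟪ψ j, (f : H)⟫ ≠ 0} =>
        ‖F (f : H)‖ / Real.sqrt (∑' j, ‖⟪ψ j, (f : H)⟫‖ ^ 2)) := by
      refine ⟨(cosAngle T S)⁻¹ / Real.sqrt c₁, ?_⟩
      rintro x ⟨f, rfl⟩
      exact upper f
    have hκpos : 0 < κ := by
      have hv : 0 < ‖F ↑f₀‖ / Real.sqrt (∑' j, ‖⟪ψ j, (f₀ : H)⟫‖ ^ 2) :=
        div_pos (norm_pos_iff.mpr hFne) (Real.sqrt_pos.mpr (sigma_pos _ f₀.2.2))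
      exact lt_of_lt_of_le hv (le_ciSup bdd f₀)
    constructor
    · -- lower bound
      have hstep : ∀ a : {x : H // x ∈ T ∧ ‖x‖ = 1},
          1 / (κ * Real.sqrt c₂) ≤ ‖(Submodule.orthogonalProjectionOnto S (a : H) : H)‖ := by
        intro a
        obtain ⟨haT, han⟩ := a.2
        have ha0 : (a : H) ≠ 0 := by
          intro h; rw [h] at han; simp at han
        have hsamp := exists_sample ↑a haT ha0
        have hval : ‖F ↑a‖ / Real.sqrt (∑' j, ‖⟪ψ j, (a : H)⟫‖ ^ 2) ≤ κ :=
          le_ciSup bdd ⟨↑a, Submodule.mem_sup_left haT, hsamp⟩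
        rw [F_fix ↑a haT, han] at hval
        have hsig : 0 < Real.sqrt (∑' j, ‖⟪ψ j, (a : H)⟫‖ ^ 2) :=
          Real.sqrt_pos.mpr (sigma_pos _ hsamp)
        have h1 : 1 ≤ κ * Real.sqrt (∑' j, ‖⟪ψ j, (a : H)⟫‖ ^ 2) := by
          rwa [div_le_iff₀ hsig] at hval
          -- hval : 1 / √Σ ≤ κ
        have h2 : Real.sqrt (∑' j, ‖⟪ψ j, (a : H)⟫‖ ^ 2) ≤
            Real.sqrt c₂ * ‖(Submodule.orthogonalProjectionOnto S (a : H) : H)‖ := by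
          calc Real.sqrt (∑' j, ‖⟪ψ j, (a : H)⟫‖ ^ 2)
              ≤ Real.sqrt (c₂ * ‖(Submodule.orthogonalProjectionOnto S (a : H) : H)‖ ^ 2) :=
                Real.sqrt_le_sqrt (frame_hi _)
            _ = Real.sqrt c₂ * ‖(Submodule.orthogonalProjectionOnto S (a : H) : H)‖ := by
                rw [Real.sqrt_mul hc₂.le, Real.sqrt_sq (norm_nonneg _)]
        have h3 : 1 ≤ (κ * Real.sqrt c₂) * ‖(Submodule.orthogonalProjectionOnto S (a : H) : H)‖ := by
          calc (1:ℝ) ≤ κ * Real.sqrt (∑' j, ‖⟪ψ j, (a : H)⟫‖ ^ 2) := h1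
            _ ≤ κ * (Real.sqrt c₂ * ‖(Submodule.orthogonalProjectionOnto S (a : H) : H)‖) :=
                mul_le_mul_of_nonneg_left h2 hκpos.le
            _ = (κ * Real.sqrt c₂) * ‖(Submodule.orthogonalProjectionOnto S (a : H) : H)‖ := by ring
        rw [div_le_iff₀ (mul_pos hκpos hsq2)]
        exact h3.trans_eq (mul_comm _ _)
      have hge : 1 / (κ * Real.sqrt c₂) ≤ cosAngle T S := le_ciInf hstep
      have h0 : 0 < 1 / (κ * Real.sqrt c₂) := by positivity
      have hinv : (cosAngle T S)⁻¹ ≤ κ * Real.sqrt c₂ := by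
        calc (cosAngle T S)⁻¹ ≤ (1 / (κ * Real.sqrt c₂))⁻¹ := by
              apply inv_anti₀ h0 hge
          _ = κ * Real.sqrt c₂ := by rw [one_div, inv_inv]
      rw [div_le_iff₀ hsq2]
      exact hinv
    · -- upper bound
      exact Real.iSup_le upper (div_nonneg (inv_nonneg.mpr hcos0) hsq1.le)
  · -- empty case: T = ⊥ and everything is zero
    haveI : IsEmpty {f : H // f ∈ T ⊔ Sᗮ ∧ ∃ j, ⟪ψ j, (f : H)⟫ ≠ 0} :=
      not_nonempty_iff.mp hK
    haveI : IsEmpty {x : H // x ∈ T ∧ ‖x‖ = 1} := by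
      constructor
      rintro ⟨a, haT, han⟩
      have ha0 : a ≠ 0 := by intro h; rw [h] at han; simp at han
      exact hK ⟨⟨a, Submodule.mem_sup_left haT, exists_sample a haT ha0⟩⟩
    have hcos : cosAngle T S = 0 := Real.iInf_of_isEmpty _
    rw [hcos, Real.iSup_of_isEmpty]
    norm_num
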